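/- Let H be a probability measure on ℝᵖ, μ̇ ∈ L²(H)^q, and {A_z : z ∈ ℝ} a scanning family (A_z ⊆ A_{z'} for z ≤ z', H(A_{−∞}) = 0, H(A_∞) = 1). Define C_z := ∫_{A_z^c} μ̇ μ̇ᵀ dH, assumed invertible for all z, z(x) := inf{z : x ∈ A_z}, and (𝒦γ)(x) := γ(x) − (∫_{A_{z(x)}} γ(y) μ̇ᵀ(y) C_{z(y)}⁻¹ dH(y)) μ̇(x). Then for every γ ∈ L²(H) with γ supported in some A_k (k finite), ⟨𝒦γ, μ̇ᵀ⟩ = 0, i.e., 𝒦γ is orthogonal to every coordinate of μ̇. -/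

import Mathlib

open MeasureTheory Filter

section Aux

variable {X : Type*} [MeasurableSpace X] {H : Measure X}

private lemma stmt15_integrable_mul_of_L2 {f g : X → ℝ} (hf : MemLp f 2 H)
    (hg : MemLp g 2 H) : Integrable (fun x => f x * g x) H := by
  have h : MemLp (f • g) 1 H := by
    haveI : ENNReal.HolderTriple 2 2 1 := ⟨by rw [inv_one, ENNReal.inv_two_add_inv_two]⟩
    exact MemLp.smul hg hf
  exact memLp_one_iff_integrable.mp h

private lemma stmt15_measurable_setIntegral (A : ℝ → Set X) (hmono : Monotone A)
    {g : X → ℝ} (hg : Integrable g H) :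
    Measurable fun z => ∫ x in A z, g x ∂H := by
  have key : ∀ h : X → ℝ, Integrable h H → (∀ x, 0 ≤ h x) →
      Measurable fun z => ∫ x in A z, h x ∂H := by
    intro h hint hpos
    apply Monotone.measurable
    intro z z' hzz'
    exact setIntegral_mono_set hint.integrableOn (ae_of_all _ hpos)
      (HasSubset.Subset.eventuallyLE (hmono hzz'))
  have hdecomp : (fun z => ∫ x in A z, g x ∂H) =
      fun z => (∫ x in A z, max (g x) 0 ∂H) - ∫ x in A z, max (-g x) 0 ∂H := by
    funext z
    rw [← integral_sub hg.pos_part.integrableOn hg.neg_part.integrableOn]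
    apply integral_congr_ae
    filter_upwards with x
    simp [max_zero_sub_max_neg_zero_eq_self]
  rw [hdecomp]
  exact (key _ hg.pos_part fun x => le_max_right _ _).sub
    (key _ hg.neg_part fun x => le_max_right _ _)

private lemma stmt15_measurable_det {q : ℕ} {M : ℝ → Matrix (Fin q) (Fin q) ℝ}
    (hM : ∀ i j, Measurable fun z => M z i j) :
    Measurable fun z => (M z).det := by
  simp_rw [Matrix.det_apply]
  apply Finset.measurable_sum
  intro σ _
  have h1 : Measurable fun z => ∏ i, M z (σ i) i :=
    Finset.measurable_prod _ fun i _ => hM _ _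
  have h2 : (fun z => Equiv.Perm.sign σ • ∏ i, M z (σ i) i) =
      fun z => ((Equiv.Perm.sign σ : ℤ) : ℝ) * ∏ i, M z (σ i) i := by
    funext z
    simp [Units.smul_def, zsmul_eq_mul]
  rw [h2]
  exact measurable_const.mul h1

private lemma stmt15_measurable_inv_entry {q : ℕ} {M : ℝ → Matrix (Fin q) (Fin q) ℝ}
    (hM : ∀ i j, Measurable fun z => M z i j) (i j : Fin q) :
    Measurable fun z => (M z)⁻¹ i j := by
  have hadj : Measurable fun z => (M z).adjugate i j := by
    simp_rw [Matrix.adjugate_apply]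
    apply stmt15_measurable_det
    intro a b
    simp_rw [Matrix.updateRow_apply]
    split_ifs
    · exact measurable_const
    · exact hM a b
  have : (fun z => (M z)⁻¹ i j) =
      fun z => ((M z).det)⁻¹ * (M z).adjugate i j := by
    funext z
    rw [Matrix.inv_def, Matrix.smul_apply, Ring.inverse_eq_inv', smul_eq_mul]
  rw [this]
  exact ((stmt15_measurable_det hM).inv).mul hadj

end Aux

/-- Scanning-family transform: with `C_z = ∫_{A_zᶜ} μ̇ μ̇ᵀ dH` invertible,
`z(x) = inf{z : x ∈ A_z}` and
`(𝒦γ)(x) = γ(x) − (∫_{A_{z(x)}} γ μ̇ᵀ C_{z(·)}⁻¹ dH) μ̇(x)`, for every `γ ∈ L²(H)`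
supported in some `A_k` one has `⟨𝒦γ, μ̇ⱼ⟩ = 0` for all `j`. -/
theorem stmt15 {p q : ℕ} (H : Measure (Fin p → ℝ)) [IsProbabilityMeasure H]
    (A : ℝ → Set (Fin p → ℝ)) (hmono : Monotone A)
    (hmeasA : ∀ z, MeasurableSet (A z))
    (hbot : Tendsto (fun z => H (A z)) atBot (nhds 0))
    (htop : Tendsto (fun z => H (A z)) atTop (nhds 1))
    (mdot : (Fin p → ℝ) → Fin q → ℝ)
    (hmm : ∀ i, Measurable fun x => mdot x i)
    (hm2 : ∀ i, MemLp (fun x => mdot x i) 2 H)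
    (C : ℝ → Matrix (Fin q) (Fin q) ℝ)
    (hCdef : ∀ z, C z = fun i j => ∫ x in (A z)ᶜ, mdot x i * mdot x j ∂H)
    (hCinv : ∀ z, IsUnit (C z))
    (zx : (Fin p → ℝ) → ℝ) (hzx : ∀ x, zx x = sInf {z | x ∈ A z})
    (hzxm : Measurable zx)
    -- the key measure-theoretic fact: `y ∈ A_{z(x)} ⟺ x ∈ A_{z(y)}ᶜ` a.e. `H × H`
    (hkey : ∀ᵐ pr ∂(H.prod H), (pr.2 ∈ A (zx pr.1) ↔ pr.1 ∉ A (zx pr.2)))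
    (γ : (Fin p → ℝ) → ℝ) (hγm : Measurable γ) (hγ2 : MemLp γ 2 H)
    (k : ℝ) (hsupp : ∀ x, x ∉ A k → γ x = 0)
    -- absolute convergence of the double integrals (Fubini justification):
    (hFub : ∀ i j l : Fin q, Integrable
      (fun pr : (Fin p → ℝ) × (Fin p → ℝ) =>
        |γ pr.2 * mdot pr.2 j * (C (zx pr.2))⁻¹ j i * mdot pr.1 i * mdot pr.1 l|)
      (H.prod H))
    (K : ((Fin p → ℝ) → ℝ) → (Fin p → ℝ) → ℝ)
    (hK : ∀ g x, K g x =
      g x - ∑ i, (∫ y in A (zx x), g y * ∑ j, mdot y j * (C (zx y))⁻¹ j i ∂H) * mdot x i) :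
    ∀ j, ∫ x, K γ x * mdot x j ∂H = 0 := by
  intro l
  -- no atoms for the distribution of `zx`
  have hatom : ∀ a : ℝ, H (zx ⁻¹' {a}) = 0 := by
    intro a
    have hbad : (H.prod H)
        {pr : (Fin p → ℝ) × (Fin p → ℝ) |
          ¬ (pr.2 ∈ A (zx pr.1) ↔ pr.1 ∉ A (zx pr.2))} = 0 := by
      exact ae_iff.mp hkey
    have h1 : H (zx ⁻¹' {a} ∩ A a) = 0 := by
      have hsub : (zx ⁻¹' {a} ∩ A a) ×ˢ (zx ⁻¹' {a} ∩ A a) ⊆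
          {pr : (Fin p → ℝ) × (Fin p → ℝ) |
            ¬ (pr.2 ∈ A (zx pr.1) ↔ pr.1 ∉ A (zx pr.2))} := by
        rintro ⟨x, y⟩ ⟨⟨hx1, hx2⟩, hy1, hy2⟩
        intro hQ
        simp only [Set.mem_preimage, Set.mem_singleton_iff] at hx1 hy1
        have : x ∉ A (zx y) := hQ.mp (by rw [hx1]; exact hy2)
        rw [hy1] at this
        exact this hx2
      have := measure_mono_null hsub hbad
      rw [Measure.prod_prod] at this
      exact mul_self_eq_zero.mp this
    have h2 : H (zx ⁻¹' {a} \ A a) = 0 := by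
      have hsub : (zx ⁻¹' {a} \ A a) ×ˢ (zx ⁻¹' {a} \ A a) ⊆
          {pr : (Fin p → ℝ) × (Fin p → ℝ) |
            ¬ (pr.2 ∈ A (zx pr.1) ↔ pr.1 ∉ A (zx pr.2))} := by
        rintro ⟨x, y⟩ ⟨⟨hx1, hx2⟩, hy1, hy2⟩
        intro hQ
        simp only [Set.mem_preimage, Set.mem_singleton_iff] at hx1 hy1
        have : y ∈ A (zx x) := hQ.mpr (by rw [hy1]; exact hx2)
        rw [hx1] at this
        exact hy2 this
      have := measure_mono_null hsub hbad
      rw [Measure.prod_prod] at this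
      exact mul_self_eq_zero.mp this
    have hsub : zx ⁻¹' {a} ⊆ (zx ⁻¹' {a} ∩ A a) ∪ (zx ⁻¹' {a} \ A a) := by
      intro x hx
      by_cases h : x ∈ A a
      · exact Or.inl ⟨hx, h⟩
      · exact Or.inr ⟨hx, h⟩
    refine le_antisymm ?_ (zero_le)
    calc H (zx ⁻¹' {a}) ≤ H ((zx ⁻¹' {a} ∩ A a) ∪ (zx ⁻¹' {a} \ A a)) :=
          measure_mono hsub
      _ ≤ H (zx ⁻¹' {a} ∩ A a) + H (zx ⁻¹' {a} \ A a) := measure_union_le _ _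
      _ = 0 := by rw [h1, h2, add_zero]
  have hne : ∀ x₀ : (Fin p → ℝ), ∀ᵐ y ∂H, zx y ≠ zx x₀ := by
    intro x₀
    rw [ae_iff]
    have : {y | ¬ zx y ≠ zx x₀} = zx ⁻¹' {zx x₀} := by
      ext y; simp
    rw [this]
    exact hatom (zx x₀)
  -- a.e., membership in `A z` is characterized by comparison with `zx`
  have hN1 : ∀ᵐ x ∂H, ∀ z, zx x < z → x ∈ A z := by
    have hU : ∀ᵐ x ∂H, ∃ n : ℕ, x ∈ A n := by
      rw [ae_iff]
      have hset : {x | ¬ ∃ n : ℕ, x ∈ A (n : ℝ)} = (⋃ n : ℕ, A (n : ℝ))ᶜ := by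
        ext x; simp
      rw [hset]
      have hUm : MeasurableSet (⋃ n : ℕ, A (n : ℝ)) :=
        MeasurableSet.iUnion fun n => hmeasA _
      rw [measure_compl hUm (measure_ne_top _ _)]
      have h1 : H (⋃ n : ℕ, A (n : ℝ)) = 1 := by
        refine le_antisymm prob_le_one ?_
        have ht : Tendsto (fun n : ℕ => H (A (n : ℝ))) atTop (nhds 1) :=
          htop.comp tendsto_natCast_atTop_atTop
        exact le_of_tendsto' ht fun n =>
          measure_mono (Set.subset_iUnion (fun m : ℕ => A (m : ℝ)) n)
      rw [h1, measure_univ, tsub_self]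
    filter_upwards [hU] with x hx z hz
    obtain ⟨n, hn⟩ := hx
    rw [hzx] at hz
    by_cases hbdd : BddBelow {w | x ∈ A w}
    · obtain ⟨s, hs, hslt⟩ := (csInf_lt_iff hbdd ⟨_, hn⟩).mp hz
      exact hmono hslt.le hs
    · obtain ⟨s, hs, hslt⟩ := not_bddBelow_iff.mp hbdd z
      exact hmono hslt.le hs
  have hN2 : ∀ᵐ x ∂H, ∀ z, z < zx x → x ∉ A z := by
    have hV : ∀ᵐ x ∂H, ∃ n : ℕ, x ∉ A (-(n : ℝ)) := by
      rw [ae_iff]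
      have hset : {x | ¬ ∃ n : ℕ, x ∉ A (-(n : ℝ))} = ⋂ n : ℕ, A (-(n : ℝ)) := by
        ext x; simp
      rw [hset]
      have ht : Tendsto (fun n : ℕ => H (A (-(n : ℝ)))) atTop (nhds 0) :=
        hbot.comp (tendsto_neg_atBot_iff.mpr tendsto_natCast_atTop_atTop)
      refine le_antisymm ?_ (zero_le)
      exact ge_of_tendsto' ht fun n =>
        measure_mono (Set.iInter_subset (fun m : ℕ => A (-(m : ℝ))) n)
    filter_upwards [hV] with x hx z hz hmem
    obtain ⟨n, hn⟩ := hx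
    have hbdd : BddBelow {w | x ∈ A w} := by
      refine ⟨-(n : ℝ), fun s hs => ?_⟩
      by_contra hlt
      push_neg at hlt
      exact hn (hmono hlt.le hs)
    have hle := csInf_le hbdd hmem
    rw [hzx] at hz
    exact absurd hle (not_le.mpr hz)
  -- a.e. set identifications used in the slicewise integrals
  have hsetc : ∀ x₀ : (Fin p → ℝ), {y | zx y < zx x₀} =ᵐ[H] A (zx x₀) := by
    intro x₀
    rw [eventuallyEq_set]
    filter_upwards [hN1, hN2, hne x₀] with y h1 h2 h3
    constructor
    · intro hlt; exact h1 _ hlt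
    · intro hmem
      by_contra hge
      push_neg at hge
      have : zx x₀ < zx y := lt_of_le_of_ne hge (Ne.symm h3)
      exact h2 _ this hmem
  have hsetd : ∀ y₀ : (Fin p → ℝ), {x | zx y₀ < zx x} =ᵐ[H] (A (zx y₀))ᶜ := by
    intro y₀
    refine eventuallyEq_set.mpr ?_
    filter_upwards [hN1, hN2, hne y₀] with x h1 h2 h3
    constructor
    · intro hlt; exact h2 _ hlt
    · intro hnm
      by_contra hng
      push_neg at hng
      have : zx x < zx y₀ := lt_of_le_of_ne hng h3
      exact hnm (h1 _ this)
  -- measurability of `z ↦ C z` and its inverse entries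
  have hCm : ∀ i j, Measurable fun z => C z i j := by
    intro i j
    have him : Integrable (fun x => mdot x i * mdot x j) H :=
      stmt15_integrable_mul_of_L2 (hm2 i) (hm2 j)
    have hfun : (fun z => C z i j) =
        fun z => (∫ x, mdot x i * mdot x j ∂H) - ∫ x in A z, mdot x i * mdot x j ∂H := by
      funext z
      rw [hCdef]
      rw [← integral_add_compl (hmeasA z) him]
      ring
    rw [hfun]
    exact measurable_const.sub (stmt15_measurable_setIntegral A hmono him)
  have hCim : ∀ i j, Measurable fun z => (C z)⁻¹ i j := fun i j =>
    stmt15_measurable_inv_entry hCm i j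
  have hgm : ∀ i : Fin q,
      Measurable fun y => γ y * ∑ j, mdot y j * (C (zx y))⁻¹ j i := by
    intro i
    exact hγm.mul (Finset.measurable_sum _ fun j _ =>
      (hmm j).mul ((hCim j i).comp hzxm))
  -- the product kernels
  set Fc : Fin q → (Fin p → ℝ) → (Fin p → ℝ) → ℝ := fun i x y =>
    (if zx y < zx x then (1 : ℝ) else 0) *
      (γ y * ∑ j, mdot y j * (C (zx y))⁻¹ j i) * (mdot x i * mdot x l) with hFcdef
  have hFmeas : ∀ i, Measurable (Function.uncurry (Fc i)) := by
    intro i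
    have : Function.uncurry (Fc i) = fun pr : (Fin p → ℝ) × (Fin p → ℝ) =>
        (if zx pr.2 < zx pr.1 then (1 : ℝ) else 0) *
          (γ pr.2 * ∑ j, mdot pr.2 j * (C (zx pr.2))⁻¹ j i) *
          (mdot pr.1 i * mdot pr.1 l) := rfl
    rw [this]
    refine Measurable.mul (Measurable.mul ?_ ((hgm i).comp measurable_snd))
      (((hmm i).comp measurable_fst).mul ((hmm l).comp measurable_fst))
    exact Measurable.ite
      (measurableSet_lt (hzxm.comp measurable_snd) (hzxm.comp measurable_fst))
      measurable_const measurable_const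
  have hFint : ∀ i, Integrable (Function.uncurry (Fc i)) (H.prod H) := by
    intro i
    refine Integrable.mono'
      (integrable_finset_sum Finset.univ fun j _ => hFub i j l)
      (hFmeas i).aestronglyMeasurable (ae_of_all _ ?_)
    rintro ⟨x, y⟩
    have hexp : (γ y * ∑ j, mdot y j * (C (zx y))⁻¹ j i) * (mdot x i * mdot x l)
        = ∑ j, γ y * mdot y j * (C (zx y))⁻¹ j i * mdot x i * mdot x l := by
      rw [Finset.mul_sum, Finset.sum_mul]
      exact Finset.sum_congr rfl fun j _ => by ring
    have h1 : ‖Function.uncurry (Fc i) (x, y)‖ ≤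
        ‖(γ y * ∑ j, mdot y j * (C (zx y))⁻¹ j i) * (mdot x i * mdot x l)‖ := by
      show ‖(if zx y < zx x then (1 : ℝ) else 0) * _ * _‖ ≤ _
      rw [mul_assoc, norm_mul]
      split_ifs
      · simp
      · simp only [norm_zero, zero_mul]
        positivity
    refine h1.trans ?_
    rw [hexp, Real.norm_eq_abs]
    refine (Finset.abs_sum_le_sum_abs _ _).trans ?_
    simp
  have hFslice1 : ∀ i x, ∫ y, Fc i x y ∂H =
      (∫ y in A (zx x), γ y * ∑ j, mdot y j * (C (zx y))⁻¹ j i ∂H) *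
        (mdot x i * mdot x l) := by
    intro i x
    have hfun : (fun y => Fc i x y) = fun y =>
        (Set.indicator {y | zx y < zx x}
          (fun y => γ y * ∑ j, mdot y j * (C (zx y))⁻¹ j i) y) *
          (mdot x i * mdot x l) := by
      funext y
      simp only [hFcdef, Set.indicator_apply, Set.mem_setOf_eq]
      split_ifs <;> ring
    rw [hfun, integral_mul_const,
      integral_indicator (measurableSet_lt hzxm measurable_const),
      setIntegral_congr_set (hsetc x)]
  have hFslice2 : ∀ i y, ∫ x, Fc i x y ∂H =
      (γ y * ∑ j, mdot y j * (C (zx y))⁻¹ j i) * C (zx y) i l := by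
    intro i y
    have hfun : (fun x => Fc i x y) = fun x =>
        (γ y * ∑ j, mdot y j * (C (zx y))⁻¹ j i) *
          (Set.indicator {x | zx y < zx x} (fun x => mdot x i * mdot x l) x) := by
      funext x
      simp only [hFcdef, Set.indicator_apply, Set.mem_setOf_eq]
      split_ifs <;> ring
    rw [hfun, integral_const_mul,
      integral_indicator (measurableSet_lt measurable_const hzxm),
      setIntegral_congr_set (hsetd y), hCdef]
    rfl
  have hInt1 : ∀ i, Integrable (fun x => ∫ y, Fc i x y ∂H) H := by
    intro i
    exact (hFint i).integral_prod_left
  have hInt2 : ∀ i, Integrable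
      (fun y => (γ y * ∑ j, mdot y j * (C (zx y))⁻¹ j i) * C (zx y) i l) H := by
    intro i
    exact ((hFint i).integral_prod_right).congr (ae_of_all _ fun y => hFslice2 i y)
  have hγl : Integrable (fun x => γ x * mdot x l) H :=
    stmt15_integrable_mul_of_L2 hγ2 (hm2 l)
  have hpt : ∀ x, K γ x * mdot x l = γ x * mdot x l - ∑ i, ∫ y, Fc i x y ∂H := by
    intro x
    rw [hK, sub_mul, Finset.sum_mul]
    congr 1
    refine Finset.sum_congr rfl fun i _ => ?_
    rw [hFslice1 i x]
    ring
  have hCC : ∀ y, ∑ i, (γ y * ∑ j, mdot y j * (C (zx y))⁻¹ j i) * C (zx y) i l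
      = γ y * mdot y l := by
    intro y
    have h1 : (C (zx y))⁻¹ * C (zx y) = 1 :=
      Matrix.nonsing_inv_mul _ ((Matrix.isUnit_iff_isUnit_det _).mp (hCinv _))
    have h2 : ∀ j, ∑ i, (C (zx y))⁻¹ j i * C (zx y) i l
        = if j = l then (1 : ℝ) else 0 := by
      intro j
      rw [← Matrix.mul_apply, h1, Matrix.one_apply]
    calc ∑ i, (γ y * ∑ j, mdot y j * (C (zx y))⁻¹ j i) * C (zx y) i l
        = ∑ i, ∑ j, γ y * mdot y j * ((C (zx y))⁻¹ j i * C (zx y) i l) := by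
          refine Finset.sum_congr rfl fun i _ => ?_
          rw [Finset.mul_sum, Finset.sum_mul]
          exact Finset.sum_congr rfl fun j _ => by ring
      _ = ∑ j, ∑ i, γ y * mdot y j * ((C (zx y))⁻¹ j i * C (zx y) i l) :=
          Finset.sum_comm
      _ = ∑ j, γ y * mdot y j * (if j = l then (1 : ℝ) else 0) := by
          refine Finset.sum_congr rfl fun j _ => ?_
          rw [← Finset.mul_sum, h2 j]
      _ = γ y * mdot y l := by simp
  calc ∫ x, K γ x * mdot x l ∂H
      = ∫ x, (γ x * mdot x l - ∑ i, ∫ y, Fc i x y ∂H) ∂H := by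
        simp only [hpt]
    _ = (∫ x, γ x * mdot x l ∂H) - ∫ x, ∑ i, (∫ y, Fc i x y ∂H) ∂H :=
        integral_sub hγl (integrable_finset_sum _ fun i _ => hInt1 i)
    _ = (∫ x, γ x * mdot x l ∂H) - ∑ i, ∫ x, (∫ y, Fc i x y ∂H) ∂H := by
        rw [integral_finset_sum _ fun i _ => hInt1 i]
    _ = (∫ x, γ x * mdot x l ∂H) - ∑ i, ∫ y, (∫ x, Fc i x y ∂H) ∂H := by
        congr 1
        exact Finset.sum_congr rfl fun i _ => integral_integral_swap (hFint i)
    _ = (∫ x, γ x * mdot x l ∂H) - ∑ i, ∫ y,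
          (γ y * ∑ j, mdot y j * (C (zx y))⁻¹ j i) * C (zx y) i l ∂H := by
        congr 1
        exact Finset.sum_congr rfl fun i _ =>
          integral_congr_ae (ae_of_all _ fun y => hFslice2 i y)
    _ = (∫ x, γ x * mdot x l ∂H) - ∫ y, ∑ i,
          (γ y * ∑ j, mdot y j * (C (zx y))⁻¹ j i) * C (zx y) i l ∂H := by
        rw [integral_finset_sum _ fun i _ => hInt2 i]
    _ = 0 := by
        simp only [hCC]
        exact sub_self _
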